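/- Let G(p) be a framework on n nodes in general position in ℝ^r admitting a positive semidefinite stress matrix of rank n−r−1. Then every vertex of G has degree at least r+1; equivalently |N̄(i)| ≤ n−r−2 for every vertex i. -/

import Mathlib

open Matrix Finset

/-- The (r+1)×n matrix whose j-th column is (p^j, 1). -/
def calA {n r : ℕ} (p : Fin n → Fin r → ℝ) : Matrix (Fin (r + 1)) (Fin n) ℝ :=
  fun i j => if h : (i : ℕ) < r then p j ⟨i, h⟩ else 1

/-- No subset of the points of cardinality r+1 is affinely dependent. -/
def InGeneralPosition {n r : ℕ} (p : Fin n → Fin r → ℝ) : Prop :=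
  ∀ s : Finset (Fin n), s.card = r + 1 →
    AffineIndependent ℝ (fun i : {x // x ∈ s} => p i)

/-- `S` is a stress matrix of the framework `G(p)`. -/
def IsStressMatrix {n r : ℕ} (G : SimpleGraph (Fin n)) (p : Fin n → Fin r → ℝ)
    (S : Matrix (Fin n) (Fin n) ℝ) : Prop :=
  S.IsSymm ∧ (∀ i j, i ≠ j → ¬ G.Adj i j → S i j = 0) ∧ calA p * S = 0

-- helper: the columns of calA as vectors
def vv {n r : ℕ} (p : Fin n → Fin r → ℝ) (j : Fin n) : Fin (r + 1) → ℝ :=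
  fun k => if h : (k : ℕ) < r then p j ⟨k, h⟩ else 1

lemma vv_last {n r : ℕ} (p : Fin n → Fin r → ℝ) (j : Fin n) :
    vv p j ⟨r, Nat.lt_succ_self r⟩ = 1 := by simp [vv]

lemma vv_lt {n r : ℕ} (p : Fin n → Fin r → ℝ) (j : Fin n) (k : Fin (r+1)) (h : (k:ℕ) < r) :
    vv p j k = p j ⟨k, h⟩ := by simp [vv, h]

lemma li_vv {n r : ℕ} (p : Fin n → Fin r → ℝ) (hgen : InGeneralPosition p)
    (s : Finset (Fin n)) (hs : s.card = r + 1) :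
    LinearIndependent ℝ (fun j : {x // x ∈ s} => vv p j) := by
  rw [Fintype.linearIndependent_iff]
  intro g hg
  have hsum : ∑ j : {x // x ∈ s}, g j = 0 := by
    have := congrFun hg ⟨r, Nat.lt_succ_self r⟩
    simpa [Finset.sum_apply, vv_last] using this
  have hvec : ∑ j : {x // x ∈ s}, g j • (fun i : {x // x ∈ s} => p i) j = 0 := by
    funext k
    have := congrFun hg ⟨(k:ℕ), k.2.trans (Nat.lt_succ_self r)⟩
    simp only [Finset.sum_apply, Pi.smul_apply, Pi.zero_apply, smul_eq_mul] at this ⊢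
    have he : ∀ j : Fin n, vv p j ⟨(k:ℕ), k.2.trans (Nat.lt_succ_self r)⟩ = p j k := by
      intro j
      rw [vv_lt p j ⟨(k:ℕ), k.2.trans (Nat.lt_succ_self r)⟩ k.2]
    simpa [he] using this
  exact fun j => affineIndependent_iff.mp (hgen s hs) Finset.univ g hsum hvec j (mem_univ j)

lemma span_vv {n r : ℕ} (p : Fin n → Fin r → ℝ) (hgen : InGeneralPosition p)
    (s : Finset (Fin n)) (hs : s.card = r + 1) :
    Submodule.span ℝ (Set.range fun j : {x // x ∈ s} => vv p j) = ⊤ := by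
  refine (li_vv p hgen s hs).span_eq_top_of_card_eq_finrank' ?_
  simp [hs]

lemma dot_zero_of_span {n r : ℕ} (p : Fin n → Fin r → ℝ) (hgen : InGeneralPosition p)
    (s : Finset (Fin n)) (hs : s.card = r + 1) (c : Fin (r+1) → ℝ)
    (h : ∀ j ∈ s, vv p j ⬝ᵥ c = 0) (y : Fin (r+1) → ℝ) : y ⬝ᵥ c = 0 := by
  have hy : y ∈ Submodule.span ℝ (Set.range fun j : {x // x ∈ s} => vv p j) := by
    rw [span_vv p hgen s hs]; trivial
  refine Submodule.span_induction ?_ ?_ ?_ ?_ hy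
  · rintro x ⟨j, rfl⟩; exact h j j.2
  · simp
  · intro a b _ _ ha hb; rw [add_dotProduct, ha, hb, add_zero]
  · intro t a _ ha; rw [smul_dotProduct, ha, smul_zero]

lemma transpose_calA_row {n r : ℕ} (p : Fin n → Fin r → ℝ) (j : Fin n) :
    (calA p)ᵀ j = vv p j := rfl

theorem degree_ge_of_psd_stress {n r : ℕ} (hn : r + 2 ≤ n)
    (G : SimpleGraph (Fin n)) [DecidableRel G.Adj]
    (p : Fin n → Fin r → ℝ) (hgen : InGeneralPosition p)
    (S : Matrix (Fin n) (Fin n) ℝ) (hS : IsStressMatrix G p S)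
    (hpsd : S.PosSemidef) (hrank : S.rank = n - r - 1) :
    ∀ i : Fin n, r + 1 ≤ G.degree i ∧
      (univ.filter (fun j => j ≠ i ∧ ¬ G.Adj i j)).card ≤ n - r - 2 := by
  obtain ⟨hsym, hzero, hAS⟩ := hS
  have hsym' : ∀ a b, S a b = S b a := fun a b => by
    have h := congrFun (congrFun hsym.eq b) a
    simpa [Matrix.transpose_apply] using h
  have hSA : S * (calA p)ᵀ = 0 := by
    have h := congrArg Matrix.transpose hAS
    rwa [Matrix.transpose_mul, hsym.eq, Matrix.transpose_zero] at h
  have hle : LinearMap.range ((calA p)ᵀ).mulVecLin ≤ LinearMap.ker S.mulVecLin := by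
    rintro x ⟨y, rfl⟩
    simp only [LinearMap.mem_ker, Matrix.mulVecLin_apply, Matrix.mulVec_mulVec, hSA,
      Matrix.zero_mulVec]
  have hrowA : ∀ (x : Fin (r+1) → ℝ) (j : Fin n), (((calA p)ᵀ) *ᵥ x) j = vv p j ⬝ᵥ x :=
    fun x j => rfl
  obtain ⟨s0, _, hs0⟩ := Finset.exists_subset_card_eq
    (s := (univ : Finset (Fin n))) (n := r+1) (by simp; omega)
  have hinj : Function.Injective ((calA p)ᵀ).mulVecLin := by
    rw [← LinearMap.ker_eq_bot, LinearMap.ker_eq_bot']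
    intro x hx
    have hdz : ∀ j ∈ s0, vv p j ⬝ᵥ x = 0 := by
      intro j _
      rw [← hrowA]
      exact congrFun hx j
    exact dotProduct_self_eq_zero.mp (dot_zero_of_span p hgen s0 hs0 x hdz x)
  have hfr1 : Module.finrank ℝ (LinearMap.range ((calA p)ᵀ).mulVecLin) = r + 1 := by
    rw [LinearMap.finrank_range_of_inj hinj]; simp
  have hrn := LinearMap.finrank_range_add_finrank_ker S.mulVecLin
  have hker : Module.finrank ℝ (LinearMap.ker S.mulVecLin) = r + 1 := by
    have hr : Module.finrank ℝ (LinearMap.range S.mulVecLin) = n - r - 1 := hrank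
    simp only [Module.finrank_fintype_fun_eq_card, Fintype.card_fin] at hrn
    omega
  have hEq : LinearMap.range ((calA p)ᵀ).mulVecLin = LinearMap.ker S.mulVecLin :=
    Submodule.eq_of_le_of_finrank_le hle (by rw [hker, hfr1])
  intro i
  have hdeg : r + 1 ≤ G.degree i := by
    by_contra hlt
    push_neg at hlt
    have htcard : (insert i (G.neighborFinset i)).card ≤ r + 1 := by
      calc (insert i (G.neighborFinset i)).card
          ≤ (G.neighborFinset i).card + 1 := Finset.card_insert_le _ _
        _ ≤ r + 1 := by
            have : (G.neighborFinset i).card = G.degree i := rfl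
            omega
    obtain ⟨s, hts, _, hscard⟩ := Finset.exists_subsuperset_card_eq
      (Finset.subset_univ (insert i (G.neighborFinset i))) htcard (by simp; omega)
    have hsum : ∑ j : Fin n, S i j • vv p j = 0 := by
      funext k
      have h0 := congrFun (congrFun hAS k) i
      simp only [Matrix.mul_apply, Matrix.zero_apply] at h0
      simp only [Finset.sum_apply, Pi.smul_apply, Pi.zero_apply, smul_eq_mul]
      calc ∑ j, S i j * vv p j k = ∑ j, calA p k j * S j i := by
            refine Finset.sum_congr rfl fun j _ => ?_
            rw [hsym' i j, mul_comm]
            rfl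
        _ = 0 := h0
    have hvanish : ∀ j ∉ s, S i j = 0 := by
      intro j hj
      have hji : j ≠ i := fun h => hj (hts (by rw [h]; exact Finset.mem_insert_self i _))
      have hadj : ¬ G.Adj i j := fun h =>
        hj (hts (Finset.mem_insert_of_mem (by simpa [SimpleGraph.mem_neighborFinset] using h)))
      exact hzero i j (Ne.symm hji) hadj
    have hsums : ∑ j ∈ s, S i j • vv p j = 0 :=
      (Finset.sum_subset (Finset.subset_univ s)
        (fun j _ hj => by rw [hvanish j hj, zero_smul])).trans hsum
    have hli := li_vv p hgen s hscard
    rw [Fintype.linearIndependent_iff] at hli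
    have hii : S i i = 0 := by
      have hmem : i ∈ s := hts (Finset.mem_insert_self i _)
      refine hli (fun j => S i ↑j) ?_ ⟨i, hmem⟩
      rw [Finset.univ_eq_attach, Finset.sum_attach s (fun j => S i j • vv p j)]
      exact hsums
    obtain ⟨B, hB⟩ : ∃ B : Matrix (Fin n) (Fin n) ℝ, S = Bᴴ * B := by
      open scoped MatrixOrder in
      exact CStarAlgebra.nonneg_iff_eq_star_mul_self.mp hpsd.nonneg
    have hBcol : ∀ k, B k i = 0 := by
      have h2 : ∑ k, B k i * B k i = 0 := by
        have h3 := hii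
        rw [hB] at h3
        simpa [Matrix.mul_apply, Matrix.conjTranspose_apply] using h3
      intro k
      exact mul_self_eq_zero.mp
        ((Finset.sum_eq_zero_iff_of_nonneg (fun k _ => mul_self_nonneg (B k i))).mp h2 k
          (mem_univ k))
    have hrowzero : ∀ j, S i j = 0 := by
      intro j
      rw [hB]
      simp [Matrix.mul_apply, Matrix.conjTranspose_apply, hBcol]
    have hek : (Pi.single i 1 : Fin n → ℝ) ∈ LinearMap.ker S.mulVecLin := by
      rw [LinearMap.mem_ker]
      funext j
      have : (S *ᵥ (Pi.single i 1 : Fin n → ℝ)) j = S j i := by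
        simp [Matrix.mulVec, dotProduct, Pi.single_apply]
      rw [Matrix.mulVecLin_apply, this, ← hsym' i j, hrowzero j]
      rfl
    rw [← hEq] at hek
    obtain ⟨c, hc⟩ := hek
    have hcall : ∀ j, vv p j ⬝ᵥ c = (Pi.single i 1 : Fin n → ℝ) j := by
      intro j
      rw [← hrowA]
      exact congrFun hc j
    have hne : (n - 1 : ℕ) ≥ r + 1 := by omega
    obtain ⟨s', hs'sub, hs'card⟩ := Finset.exists_subset_card_eq
      (s := (univ.erase i : Finset (Fin n))) (n := r+1)
      (by rw [Finset.card_erase_of_mem (mem_univ i)]; simp; omega)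
    have hzero' : ∀ j ∈ s', vv p j ⬝ᵥ c = 0 := by
      intro j hj
      rw [hcall j, Pi.single_eq_of_ne (Finset.ne_of_mem_erase (hs'sub hj))]
    have h1 : vv p i ⬝ᵥ c = 0 := dot_zero_of_span p hgen s' hs'card c hzero' (vv p i)
    rw [hcall i, Pi.single_eq_same] at h1
    exact one_ne_zero h1
  refine ⟨hdeg, ?_⟩
  have hfe : univ.filter (fun j => j ≠ i ∧ ¬ G.Adj i j) = (insert i (G.neighborFinset i))ᶜ := by
    ext j
    simp [SimpleGraph.mem_neighborFinset, not_or]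
  rw [hfe, Finset.card_compl]
  have hcins : (insert i (G.neighborFinset i)).card = G.degree i + 1 := by
    rw [Finset.card_insert_of_notMem (by simp)]
    rfl
  rw [hcins]
  simp only [Fintype.card_fin]
  omega
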